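/- Let g be the inverse of x ↦ x·tanh(x) on [0,∞) and f(x) = csch²(g(x/2)). Then f(x) ≥ 2/(e^x - 1) for all x > 0, i.e., the saturable TUR bound is tighter than the bound 2/(e^⟨Σ⟩ - 1). -/

import Mathlib

open Real

private lemma sinh_le_mul_cosh {t : ℝ} (ht : 0 ≤ t) : Real.sinh t ≤ t * Real.cosh t := by
  have key : MonotoneOn (fun u : ℝ => u * Real.cosh u - Real.sinh u) (Set.Ici 0) := by
    apply monotoneOn_of_deriv_nonneg (convex_Ici 0)
    · fun_prop
    · intro u _
      exact (((hasDerivAt_id u).mul (Real.hasDerivAt_cosh u)).sub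
        (Real.hasDerivAt_sinh u)).differentiableAt.differentiableWithinAt
    · intro u hu
      have hd : HasDerivAt (fun u : ℝ => u * Real.cosh u - Real.sinh u)
          (1 * Real.cosh u + u * Real.sinh u - Real.cosh u) u :=
        ((hasDerivAt_id u).mul (Real.hasDerivAt_cosh u)).sub (Real.hasDerivAt_sinh u)
      rw [hd.deriv]
      have hu0 : 0 < u := by simpa using hu
      have := Real.sinh_pos_iff.mpr hu0
      nlinarith
  have := key (Set.self_mem_Ici) (Set.mem_Ici.mpr ht) ht
  simpa using this

private lemma cosh_two_le_exp {t : ℝ} (ht : 0 ≤ t) :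
    Real.cosh (2 * t) ≤ Real.exp (2 * (t * Real.tanh t)) := by
  set F : ℝ → ℝ := fun u => 2 * (u * Real.tanh u) - Real.log (Real.cosh (2 * u)) with hF
  have hcosh_pos : ∀ u : ℝ, (0:ℝ) < Real.cosh u := Real.cosh_pos
  have hderiv : ∀ u : ℝ, HasDerivAt F
      (2 * (Real.tanh u + u * (1 / Real.cosh u ^ 2)) -
        2 * Real.sinh (2 * u) / Real.cosh (2 * u)) u := by
    intro u
    have hc := (hcosh_pos u).ne'
    have htanh : HasDerivAt Real.tanh (1 / Real.cosh u ^ 2) u := by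
      have h1 : HasDerivAt (fun v => Real.sinh v / Real.cosh v)
          ((Real.cosh u * Real.cosh u - Real.sinh u * Real.sinh u) / Real.cosh u ^ 2) u :=
        (Real.hasDerivAt_sinh u).div (Real.hasDerivAt_cosh u) hc
      have heq : (Real.cosh u * Real.cosh u - Real.sinh u * Real.sinh u) / Real.cosh u ^ 2
          = 1 / Real.cosh u ^ 2 := by
        have := Real.cosh_sq_sub_sinh_sq u
        rw [show Real.cosh u * Real.cosh u - Real.sinh u * Real.sinh u
            = Real.cosh u ^ 2 - Real.sinh u ^ 2 by ring, this]
      have h2 := heq ▸ h1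
      exact h2.congr_of_eventuallyEq (by filter_upwards with v using
        (Real.tanh_eq_sinh_div_cosh v))
    have h3 : HasDerivAt (fun u : ℝ => u * Real.tanh u)
        (Real.tanh u + u * (1 / Real.cosh u ^ 2)) u := by
      have := (hasDerivAt_id u).mul htanh
      exact (this.congr_deriv (by simp)).congr_of_eventuallyEq
        (Filter.Eventually.of_forall fun v => rfl)
    have h4 : HasDerivAt (fun u : ℝ => Real.cosh (2 * u)) (Real.sinh (2 * u) * 2) u := by
      have := (Real.hasDerivAt_cosh (2 * u)).comp u
        ((hasDerivAt_id u).const_mul (2:ℝ))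
      simpa [Function.comp_def, mul_comm] using this
    have h5 : HasDerivAt (fun u : ℝ => Real.log (Real.cosh (2 * u)))
        (Real.sinh (2 * u) * 2 / Real.cosh (2 * u)) u :=
      h4.log (hcosh_pos (2 * u)).ne'
    have := (h3.const_mul (2:ℝ)).sub h5
    exact this.congr_deriv (by ring)
  have hmono : MonotoneOn F (Set.Ici 0) := by
    apply monotoneOn_of_deriv_nonneg (convex_Ici 0)
    · exact fun u _ => (hderiv u).differentiableAt.continuousAt.continuousWithinAt
    · intro u _; exact (hderiv u).differentiableAt.differentiableWithinAt
    · intro u hu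
      have hu0 : (0:ℝ) < u := by simpa using hu
      rw [(hderiv u).deriv]
      set c := Real.cosh u
      set s := Real.sinh u
      have hc1 : 1 ≤ c := Real.one_le_cosh u
      have hs0 : 0 < s := Real.sinh_pos_iff.mpr hu0
      have hsc : s ≤ u * c := sinh_le_mul_cosh hu0.le
      have hid : c ^ 2 - s ^ 2 = 1 := Real.cosh_sq_sub_sinh_sq u
      have h2c : Real.cosh (2 * u) = 2 * c ^ 2 - 1 := by
        rw [Real.cosh_two_mul]; linarith [hid]
      have h2s : Real.sinh (2 * u) = 2 * s * c := Real.sinh_two_mul u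
      have htu : Real.tanh u = s / c := Real.tanh_eq_sinh_div_cosh u
      rw [h2c, h2s, htu]
      have hcpos : (0:ℝ) < c := lt_of_lt_of_le one_pos hc1
      have h2cpos : (0:ℝ) < 2 * c ^ 2 - 1 := by nlinarith
      rw [sub_nonneg, div_le_iff₀ h2cpos]
      have hexp : 2 * (s / c + u * (1 / c ^ 2)) * (2 * c ^ 2 - 1)
          = (2 / c ^ 2) * ((s * c + u) * (2 * c ^ 2 - 1)) := by
        field_simp
      rw [hexp]
      rw [show 2 * (2 * s * c) = (2 / c ^ 2) * (2 * s * c ^ 3) by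
        field_simp]
      apply mul_le_mul_of_nonneg_left _ (by positivity)
      nlinarith [sq_nonneg s, sq_nonneg c, mul_pos hs0 hcpos]
  have hF0 : F 0 = 0 := by simp [hF]
  have hFt : 0 ≤ F t := by
    have := hmono Set.self_mem_Ici (Set.mem_Ici.mpr ht) ht
    rw [hF0] at this; exact this
  have hlog : Real.log (Real.cosh (2 * t)) ≤ 2 * (t * Real.tanh t) := by
    simp only [hF] at hFt; linarith
  calc Real.cosh (2 * t) = Real.exp (Real.log (Real.cosh (2 * t))) :=
        (Real.exp_log (hcosh_pos (2 * t))).symm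
    _ ≤ Real.exp (2 * (t * Real.tanh t)) := Real.exp_le_exp.mpr hlog

/-- Let `g` be the inverse of `x ↦ x * tanh x` on `[0, ∞)` and
`f x = csch² (g (x/2))`.  Then `f x ≥ 2/(e^x - 1)` for all `x > 0`: the saturable
TUR bound is tighter than the bound `2/(e^⟨Σ⟩ - 1)`. -/
theorem tur_f_ge_exchange_bound
    (g : ℝ → ℝ)
    (hg : ∀ x ∈ Set.Ici (0 : ℝ), g x ∈ Set.Ici (0 : ℝ) ∧ g x * Real.tanh (g x) = x)
    (f : ℝ → ℝ) (hf : ∀ x, f x = (1 / Real.sinh (g (x / 2))) ^ 2) :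
    ∀ x > (0 : ℝ), f x ≥ 2 / (Real.exp x - 1) := by
  intro x hx
  obtain ⟨htI, htx⟩ := hg (x / 2) (Set.mem_Ici.mpr (by positivity))
  set t := g (x / 2) with htdef
  have ht0 : 0 ≤ t := htI
  have htpos : 0 < t := by
    rcases lt_or_eq_of_le ht0 with h | h
    · exact h
    · exfalso; rw [← h] at htx; simp at htx; linarith
  have hs : 0 < Real.sinh t := Real.sinh_pos_iff.mpr htpos
  have hex : 0 < Real.exp x - 1 := by
    have := Real.add_one_lt_exp (ne_of_gt hx)
    linarith
  rw [hf, ge_iff_le, div_le_iff₀ hex]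
  have hkey : Real.cosh (2 * t) ≤ Real.exp x := by
    have := cosh_two_le_exp ht0
    rwa [show 2 * (t * Real.tanh t) = x by rw [htx]; ring] at this
  have hc2 : Real.cosh (2 * t) = 2 * Real.sinh t ^ 2 + 1 := by
    rw [Real.cosh_two_mul]
    have := Real.cosh_sq_sub_sinh_sq t
    nlinarith
  have h1 : 2 * Real.sinh t ^ 2 ≤ Real.exp x - 1 := by
    rw [hc2] at hkey; linarith
  rw [div_pow, one_pow, div_mul_eq_mul_div, le_div_iff₀ (pow_pos hs 2)]
  linarith
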